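/- arXiv:2110.11066 — 2 statements merged into one kernel-verified Lean document; each statement's English description precedes it below -/
import Mathlib

section
/- (Type A_n, principal element.) Let n ≥ 1 and let ρ = ϖ₁ + ⋯ + ϖ_n ∈ ℝ^{n+1}, the vector whose i-th coordinate is (n+2−2i)/2 for i = 1, …, n+1. Set l = ⌊(n+2)/2⌋. Then the minimum over k ∈ {1, …, n} of ℓ_ρ⁻(ϖ_k) equals l and is attained at k = 1: ℓ_ρ⁻(ϖ₁) = l. Moreover, the only linear map of ℝ^{n+1} expressible as a composition of at most l simple reflections of type A_n and satisfying ⟨w ϖ₁, ρ⟩ < 0 is w = s_l ∘ s_{l−1} ∘ ⋯ ∘ s₁ (with s₁ applied first). -/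
open scoped RealInnerProductSpace

/-- The `j`-th simple reflection of type `Aₙ` (`1 ≤ j ≤ n`), acting on `ℝ^{n+1}`:
it transposes the coordinates numbered `j` and `j+1` (in `1`-based numbering). -/
noncomputable def sA (n j : ℕ) :
    EuclideanSpace ℝ (Fin (n + 1)) → EuclideanSpace ℝ (Fin (n + 1)) :=
  fun v => WithLp.toLp 2 (fun i =>
    v ⟨(if (i : ℕ) + 1 = j then j else if (i : ℕ) = j then j - 1 else (i : ℕ)) % (n + 1),
      Nat.mod_lt _ (Nat.succ_pos n)⟩)

/-- The composition of the simple reflections indexed by the entries of `l`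
(the last entry of the list is applied first). -/
noncomputable def compA (n : ℕ) (l : List ℕ) :
    EuclideanSpace ℝ (Fin (n + 1)) → EuclideanSpace ℝ (Fin (n + 1)) :=
  l.foldr (fun j g => sA n j ∘ g) id

/-- The fundamental weight `ϖⱼ = e₁ + ⋯ + eⱼ − (j/(n+1))·ε` of type `Aₙ` (`1 ≤ j ≤ n`). -/
noncomputable def wtA (n j : ℕ) : EuclideanSpace ℝ (Fin (n + 1)) :=
  WithLp.toLp 2 (fun i => (if (i : ℕ) < j then 1 else 0) - (j : ℝ) / ((n : ℝ) + 1))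

/-- `ρ = ϖ₁ + ⋯ + ϖₙ`, the vector whose `i`-th coordinate is `(n+2−2i)/2` (`1`-based `i`). -/
noncomputable def rhoA (n : ℕ) : EuclideanSpace ℝ (Fin (n + 1)) :=
  WithLp.toLp 2 (fun i => ((n : ℝ) + 2 - 2 * ((i : ℕ) + 1)) / 2)

-- auxiliary defs
noncomputable def vecA (n p : ℕ) : EuclideanSpace ℝ (Fin (n + 1)) :=
  WithLp.toLp 2 (fun i => (if (i : ℕ) = p then 1 else 0) - 1 / ((n : ℝ) + 1))

def posF (j p : ℕ) : ℕ := if p + 1 = j then j else if p = j then j - 1 else p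

lemma sA_vec (n j p : ℕ) (hj1 : 1 ≤ j) (hjn : j ≤ n) (hp : p ≤ n) :
    sA n j (vecA n p) = vecA n (posF j p) := by
  ext i
  have hi : (i : ℕ) ≤ n := Nat.lt_succ_iff.mp i.2
  show (if ((if (i:ℕ)+1 = j then j else if (i:ℕ) = j then j - 1 else (i:ℕ)) % (n+1) : ℕ) = p
      then (1:ℝ) else 0) - 1/((n:ℝ)+1)
    = (if (i:ℕ) = posF j p then (1:ℝ) else 0) - 1/((n:ℝ)+1)
  have hm : ((if (i:ℕ)+1 = j then j else if (i:ℕ) = j then j - 1 else (i:ℕ)) % (n+1))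
      = (if (i:ℕ)+1 = j then j else if (i:ℕ) = j then j - 1 else (i:ℕ)) :=
    Nat.mod_eq_of_lt (by split_ifs <;> omega)
  rw [hm]
  unfold posF
  split_ifs <;> first | rfl | omega

lemma wtA_one (n : ℕ) : wtA n 1 = vecA n 0 := by
  ext i
  show (if (i:ℕ) < 1 then (1:ℝ) else 0) - (1:ℕ) / ((n:ℝ)+1)
    = (if (i:ℕ) = 0 then (1:ℝ) else 0) - 1/((n:ℝ)+1)
  norm_num [Nat.lt_one_iff]

lemma posL_lemma (n : ℕ) (l : List ℕ) (hl : ∀ m ∈ l, 1 ≤ m ∧ m ≤ n) :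
    compA n l (wtA n 1) = vecA n (l.foldr posF 0) ∧
    l.foldr posF 0 ≤ n ∧ l.foldr posF 0 ≤ l.length := by
  induction l with
  | nil =>
      refine ⟨wtA_one n, Nat.zero_le _, Nat.le_refl _⟩
  | cons j l ih =>
      obtain ⟨h1, h2, h3⟩ := ih (fun m hm => hl m (List.mem_cons_of_mem _ hm))
      obtain ⟨hj1, hjn⟩ := hl j List.mem_cons_self
      have hfold : List.foldr posF 0 (j :: l) = posF j (List.foldr posF 0 l) := rfl
      set p := List.foldr posF 0 l with hp
      refine ⟨?_, ?_, ?_⟩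
      · show sA n j (compA n l (wtA n 1)) = vecA n (List.foldr posF 0 (j :: l))
        rw [hfold, h1, sA_vec n j _ hj1 hjn h2]
      · rw [hfold]; unfold posF; split_ifs <;> omega
      · rw [hfold, List.length_cons]; unfold posF; split_ifs <;> omega

lemma sum_aux (n : ℕ) : ∀ m : ℕ, ∑ i ∈ Finset.range m, ((n:ℝ) - 2*i) = m * ((n:ℝ) - m + 1) := by
  intro m
  induction m with
  | zero => simp
  | succ m ih => rw [Finset.sum_range_succ, ih]; push_cast; ring

lemma sum_rho (n : ℕ) : ∑ i : Fin (n+1), rhoA n i = 0 := by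
  have : ∀ i : Fin (n+1), rhoA n i = ((n:ℝ) - 2*(i:ℕ))/2 := by
    intro i; show ((n : ℝ) + 2 - 2 * ((i : ℕ) + 1)) / 2 = _; ring
  simp only [this]
  rw [Fin.sum_univ_eq_sum_range (fun i => ((n:ℝ) - 2*i)/2)]
  rw [← Finset.sum_div, sum_aux]
  push_cast; ring

lemma inner_vecA (n p : ℕ) (hp : p ≤ n) :
    ⟪vecA n p, rhoA n⟫ = ((n:ℝ) - 2*p)/2 := by
  have hfin : (p : ℕ) < n + 1 := Nat.lt_succ_of_le hp
  have : ⟪vecA n p, rhoA n⟫ = ∑ i : Fin (n+1), vecA n p i * rhoA n i := by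
    simp [PiLp.inner_apply, RCLike.inner_apply, conj_trivial, mul_comm]
  rw [this]
  have expand : ∀ i : Fin (n+1), vecA n p i * rhoA n i
      = (if i = (⟨p, hfin⟩ : Fin (n+1)) then rhoA n i else 0) - (1/((n:ℝ)+1)) * rhoA n i := by
    intro i
    show ((if (i:ℕ) = p then (1:ℝ) else 0) - 1/((n:ℝ)+1)) * rhoA n i = _
    have : ((i:ℕ) = p) ↔ (i = (⟨p, hfin⟩ : Fin (n+1))) := by
      constructor
      · intro h; exact Fin.ext h
      · intro h; rw [h]
    split_ifs with h1 h2 h2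
    · ring
    · exact absurd (this.mp h1) h2
    · exact absurd (this.mpr h2) h1
    · ring
  simp only [expand]
  rw [Finset.sum_sub_distrib, Finset.sum_ite_eq' Finset.univ _ (fun i => rhoA n i),
    ← Finset.mul_sum, sum_rho]
  simp only [Finset.mem_univ, if_true, mul_zero, sub_zero]
  show ((n : ℝ) + 2 - 2 * ((p:ℕ) + 1)) / 2 = _
  ring

lemma sA_apply_swap (n j : ℕ) (hj1 : 1 ≤ j) (hjn : j ≤ n) (v : EuclideanSpace ℝ (Fin (n+1)))
    (a b : Fin (n+1)) (ha : (a:ℕ) = j - 1) (hb : (b:ℕ) = j) :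
    ∀ i, sA n j v i = v (Equiv.swap a b i) := by
  intro i
  have hi : (i : ℕ) ≤ n := Nat.lt_succ_iff.mp i.2
  show v ⟨(if (i:ℕ)+1 = j then j else if (i:ℕ) = j then j - 1 else (i:ℕ)) % (n+1), _⟩
    = v (Equiv.swap a b i)
  apply congrArg (WithLp.ofLp v)
  apply Fin.ext
  show ((if (i:ℕ)+1 = j then j else if (i:ℕ) = j then j - 1 else (i:ℕ)) % (n+1) : ℕ)
    = ((Equiv.swap a b i : Fin (n+1)) : ℕ)
  have hm : ((if (i:ℕ)+1 = j then j else if (i:ℕ) = j then j - 1 else (i:ℕ)) % (n+1))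
      = (if (i:ℕ)+1 = j then j else if (i:ℕ) = j then j - 1 else (i:ℕ)) :=
    Nat.mod_eq_of_lt (by split_ifs <;> omega)
  rw [hm]
  rcases eq_or_ne i a with rfl | hia
  · rw [Equiv.swap_apply_left]
    split_ifs <;> omega
  · rcases eq_or_ne i b with rfl | hib
    · rw [Equiv.swap_apply_right]
      split_ifs <;> omega
    · rw [Equiv.swap_apply_of_ne_of_ne hia hib]
      have h1 : (i:ℕ) ≠ j - 1 := fun h => hia (Fin.ext (by omega))
      have h2 : (i:ℕ) ≠ j := fun h => hib (Fin.ext (by omega))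
      split_ifs <;> omega

lemma inner_sA (n j : ℕ) (hj1 : 1 ≤ j) (hjn : j ≤ n) (v : EuclideanSpace ℝ (Fin (n+1))) :
    ⟪sA n j v, rhoA n⟫ = ⟪v, rhoA n⟫
      + v ⟨j, Nat.lt_succ_of_le hjn⟩ - v ⟨j-1, by omega⟩ := by
  set a : Fin (n+1) := ⟨j-1, by omega⟩ with hadef
  set b : Fin (n+1) := ⟨j, Nat.lt_succ_of_le hjn⟩ with hbdef
  have hab : a ≠ b := by
    intro h
    have := Fin.val_eq_val a b
    simp [hadef, hbdef, Fin.ext_iff] at h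
    omega
  have key : ∀ i, sA n j v i = v (Equiv.swap a b i) :=
    sA_apply_swap n j hj1 hjn v a b rfl rfl
  have h1 : ⟪sA n j v, rhoA n⟫ = ∑ i : Fin (n+1), v (Equiv.swap a b i) * rhoA n i := by
    simp only [PiLp.inner_apply, RCLike.inner_apply, conj_trivial]
    exact Finset.sum_congr rfl fun i _ => by rw [key i]; ring
  have h2 : ∑ i : Fin (n+1), v (Equiv.swap a b i) * rhoA n i
      = ∑ i : Fin (n+1), v i * rhoA n (Equiv.swap a b i) := by
    rw [← Equiv.sum_comp (Equiv.swap a b) (fun i => v i * rhoA n (Equiv.swap a b i))]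
    exact Finset.sum_congr rfl fun i _ => by rw [Equiv.swap_apply_self]
  have h3 : ∑ i : Fin (n+1), v i * rhoA n (Equiv.swap a b i)
      = (∑ i : Fin (n+1), v i * rhoA n i)
        + (v a * (rhoA n b - rhoA n a) + v b * (rhoA n a - rhoA n b)) := by
    have : ∀ i : Fin (n+1), v i * rhoA n (Equiv.swap a b i)
        = v i * rhoA n i + (if i = a then v a * (rhoA n b - rhoA n a)
            else if i = b then v b * (rhoA n a - rhoA n b) else 0) := by
      intro i
      rcases eq_or_ne i a with rfl | hia
      · rw [Equiv.swap_apply_left, if_pos rfl]; ring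
      · rcases eq_or_ne i b with rfl | hib
        · rw [Equiv.swap_apply_right, if_neg hia, if_pos rfl]; ring
        · rw [Equiv.swap_apply_of_ne_of_ne hia hib, if_neg hia, if_neg hib]; ring
    simp only [this]
    rw [Finset.sum_add_distrib]
    congr 1
    have split2 : ∀ i : Fin (n+1),
        (if i = a then v a * (rhoA n b - rhoA n a)
          else if i = b then v b * (rhoA n a - rhoA n b) else 0)
        = (if i = a then v a * (rhoA n b - rhoA n a) else 0)
          + (if i = b then v b * (rhoA n a - rhoA n b) else 0) := by
      intro i
      rcases eq_or_ne i a with rfl | hia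
      · rw [if_pos rfl, if_pos rfl, if_neg hab]; ring
      · rw [if_neg hia, if_neg hia, zero_add]
    simp only [split2]
    rw [Finset.sum_add_distrib, Finset.sum_ite_eq' Finset.univ a,
      Finset.sum_ite_eq' Finset.univ b]
    simp
  have hrho : rhoA n b - rhoA n a = -1 := by
    show ((n : ℝ) + 2 - 2 * ((j:ℕ) + 1)) / 2 - ((n : ℝ) + 2 - 2 * (((j-1:ℕ):ℝ) + 1)) / 2 = -1
    have : ((j - 1 : ℕ) : ℝ) = (j : ℝ) - 1 := by
      push_cast [hj1]; ring
    rw [this]; ring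
  have hv : ⟪v, rhoA n⟫ = ∑ i : Fin (n+1), v i * rhoA n i := by
    simp [PiLp.inner_apply, RCLike.inner_apply, conj_trivial, mul_comm]
  rw [h1, h2, h3, ← hv]
  have hrho' : rhoA n a - rhoA n b = 1 := by linarith
  rw [hrho, hrho']
  ring

lemma compA_entry (n : ℕ) (l : List ℕ) (v : EuclideanSpace ℝ (Fin (n+1))) (i : Fin (n+1)) :
    ∃ i', compA n l v i = v i' := by
  induction l generalizing i with
  | nil => exact ⟨i, rfl⟩
  | cons j l ih =>
      show ∃ i', sA n j (compA n l v) i = v i'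
      exact ih _

lemma wtA_diff (n k : ℕ) (i₁ i₂ : Fin (n+1)) : wtA n k i₂ - wtA n k i₁ ≥ -1 := by
  show ((if (i₂:ℕ) < k then (1:ℝ) else 0) - (k:ℝ)/((n:ℝ)+1))
      - ((if (i₁:ℕ) < k then (1:ℝ) else 0) - (k:ℝ)/((n:ℝ)+1)) ≥ -1
  split_ifs <;> norm_num

lemma ip_lower (n k : ℕ) (l : List ℕ) (hl : ∀ m ∈ l, 1 ≤ m ∧ m ≤ n) :
    ⟪compA n l (wtA n k), rhoA n⟫ ≥ ⟪wtA n k, rhoA n⟫ - l.length := by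
  induction l with
  | nil => simp [compA]
  | cons j l ih =>
      obtain ⟨hj1, hjn⟩ := hl j List.mem_cons_self
      have ih' := ih (fun m hm => hl m (List.mem_cons_of_mem _ hm))
      have step : ⟪compA n (j :: l) (wtA n k), rhoA n⟫
          = ⟪compA n l (wtA n k), rhoA n⟫
            + compA n l (wtA n k) ⟨j, Nat.lt_succ_of_le hjn⟩
            - compA n l (wtA n k) ⟨j-1, by omega⟩ :=
        inner_sA n j hj1 hjn _
      obtain ⟨i₂, hi₂⟩ := compA_entry n l (wtA n k) ⟨j, Nat.lt_succ_of_le hjn⟩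
      obtain ⟨i₁, hi₁⟩ := compA_entry n l (wtA n k) ⟨j-1, by omega⟩
      have := wtA_diff n k i₁ i₂
      rw [step, hi₁, hi₂]
      simp only [List.length_cons]
      push_cast
      linarith

lemma inner_wtA (n k : ℕ) (hk : k ≤ n) :
    ⟪wtA n k, rhoA n⟫ = (k:ℝ) * ((n:ℝ) - k + 1) / 2 := by
  have h0 : ⟪wtA n k, rhoA n⟫ = ∑ i : Fin (n+1), wtA n k i * rhoA n i := by
    simp [PiLp.inner_apply, RCLike.inner_apply, conj_trivial, mul_comm]
  rw [h0]
  have expand : ∀ i : Fin (n+1), wtA n k i * rhoA n i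
      = (if (i:ℕ) < k then rhoA n i else 0) - ((k:ℝ)/((n:ℝ)+1)) * rhoA n i := by
    intro i
    show ((if (i:ℕ) < k then (1:ℝ) else 0) - (k:ℝ)/((n:ℝ)+1)) * rhoA n i = _
    split_ifs <;> ring
  simp only [expand]
  rw [Finset.sum_sub_distrib, ← Finset.mul_sum, sum_rho, mul_zero, sub_zero]
  have hr : ∀ i : Fin (n+1), (if (i:ℕ) < k then rhoA n i else 0)
      = (fun m : ℕ => if m < k then ((n:ℝ) - 2*m)/2 else 0) (i:ℕ) := by
    intro i
    show _ = if (i:ℕ) < k then ((n:ℝ) - 2*(i:ℕ))/2 else 0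
    split_ifs with h
    · show ((n : ℝ) + 2 - 2 * ((i:ℕ) + 1)) / 2 = _; ring
    · rfl
  simp only [hr]
  rw [Fin.sum_univ_eq_sum_range (fun m : ℕ => if m < k then ((n:ℝ) - 2*m)/2 else 0)]
  rw [← Finset.sum_filter]
  have hf : (Finset.range (n+1)).filter (· < k) = Finset.range k := by
    ext i; simp; omega
  rw [hf, ← Finset.sum_div, sum_aux]

lemma range_map_succ (t : ℕ) :
    (List.range (t+1)).map (fun i => t + 1 - i)
      = (t+1) :: (List.range t).map (fun i => t - i) := by
  rw [List.range_succ_eq_map, List.map_cons, List.map_map]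
  congr 1
  apply List.map_congr_left
  intro i _
  show t + 1 - (i + 1) = t - i
  omega

lemma foldr_canonical (t : ℕ) :
    List.foldr posF 0 ((List.range t).map (fun i => t - i)) = t := by
  induction t with
  | zero => simp
  | succ t ih =>
      rw [range_map_succ, List.foldr_cons, ih]
      unfold posF
      simp

lemma posF_le (j p : ℕ) : posF j p ≤ p + 1 := by
  unfold posF; split_ifs <;> omega

lemma foldr_le_length (l : List ℕ) : List.foldr posF 0 l ≤ l.length := by
  induction l with
  | nil => simp
  | cons j l ih =>
      rw [List.foldr_cons, List.length_cons]
      exact le_trans (posF_le _ _) (by omega)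

lemma unique_list (l : List ℕ) (h : List.foldr posF 0 l = l.length) :
    l = (List.range l.length).map (fun i => l.length - i) := by
  induction l with
  | nil => simp
  | cons j l ih =>
      rw [List.foldr_cons, List.length_cons] at h
      have hp : List.foldr posF 0 l ≤ l.length := foldr_le_length l
      have hple : posF j (List.foldr posF 0 l) ≤ List.foldr posF 0 l + 1 := posF_le _ _
      have hpeq : List.foldr posF 0 l = l.length := by omega
      have hj : j = l.length + 1 := by
        have := h
        rw [hpeq] at this
        unfold posF at this
        split_ifs at this <;> omega
      rw [List.length_cons, range_map_succ, ← ih hpeq, hj]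

theorem statement4 (n : ℕ) (hn : 1 ≤ n) :
    IsLeast {k : ℕ | ∃ l : List ℕ, (∀ m ∈ l, 1 ≤ m ∧ m ≤ n) ∧ l.length = k ∧
        ⟪compA n l (wtA n 1), rhoA n⟫ < 0} ((n + 2) / 2) ∧
    (∀ k, 1 ≤ k → k ≤ n → ∀ l : List ℕ, (∀ m ∈ l, 1 ≤ m ∧ m ≤ n) →
        ⟪compA n l (wtA n k), rhoA n⟫ < 0 → (n + 2) / 2 ≤ l.length) ∧
    (∀ l : List ℕ, (∀ m ∈ l, 1 ≤ m ∧ m ≤ n) → l.length ≤ (n + 2) / 2 →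
        ⟪compA n l (wtA n 1), rhoA n⟫ < 0 →
        compA n l = compA n ((List.range ((n + 2) / 2)).map (fun i => (n + 2) / 2 - i))) := by
  set L0 := (n + 2) / 2 with hL0
  have hL0n : L0 ≤ n := by omega
  have hL0big : n + 1 ≤ 2 * L0 := by omega
  -- canonical list
  set C : List ℕ := (List.range L0).map (fun i => L0 - i) with hC
  have hCvalid : ∀ m ∈ C, 1 ≤ m ∧ m ≤ n := by
    intro m hm
    rw [hC, List.mem_map] at hm
    obtain ⟨i, hi, rfl⟩ := hm
    rw [List.mem_range] at hi
    omega
  have hClen : C.length = L0 := by simp [hC]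
  have hCfold : List.foldr posF 0 C = L0 := foldr_canonical L0
  -- part 2
  have part2 : ∀ k, 1 ≤ k → k ≤ n → ∀ l : List ℕ, (∀ m ∈ l, 1 ≤ m ∧ m ≤ n) →
      ⟪compA n l (wtA n k), rhoA n⟫ < 0 → L0 ≤ l.length := by
    intro k hk1 hkn l hl hip
    have h1 := ip_lower n k l hl
    have h2 := inner_wtA n k hkn
    have h3 : (k:ℝ) * ((n:ℝ) - k + 1) / 2 < l.length := by
      rw [h2] at h1; linarith
    have h4 : ((k * (n - k + 1) : ℕ) : ℝ) < ((2 * l.length : ℕ) : ℝ) := by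
      have hsub : ((n - k : ℕ) : ℝ) = (n : ℝ) - k := by push_cast [hkn]; ring
      push_cast [hsub]
      linarith
    have h5 : k * (n - k + 1) < 2 * l.length := by exact_mod_cast h4
    have h6 : n ≤ k * (n - k + 1) := by
      obtain ⟨d, rfl⟩ : ∃ d, n = k + d := ⟨n - k, by omega⟩
      have hd : k + d - k + 1 = d + 1 := by omega
      rw [hd]
      have : d ≤ k * d := Nat.le_mul_of_pos_left d (by omega)
      calc k + d ≤ k + k * d := by omega
        _ = k * (d + 1) := by ring
    omega
  -- membership
  have hmem : ⟪compA n C (wtA n 1), rhoA n⟫ < 0 := by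
    have := (posL_lemma n C hCvalid).1
    rw [this, hCfold, inner_vecA n L0 hL0n]
    have : ((n:ℝ) + 1) ≤ 2 * (L0:ℝ) := by exact_mod_cast hL0big
    linarith
  refine ⟨⟨⟨C, hCvalid, hClen, hmem⟩, ?_⟩, part2, ?_⟩
  · rintro k ⟨l, hl, rfl, hip⟩
    exact part2 1 le_rfl hn l hl hip
  · intro l hl hlen hip
    obtain ⟨heq, hpn, hplen⟩ := posL_lemma n l hl
    set p := List.foldr posF 0 l with hpdef
    rw [heq, inner_vecA n p hpn] at hip
    have hcast : (n:ℝ) < 2 * (p:ℝ) := by linarith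
    have hnp : n < 2 * p := by exact_mod_cast hcast
    have hplow : L0 ≤ p := by omega
    have hlenL0 : l.length = L0 := by omega
    have hfold : List.foldr posF 0 l = l.length := by omega
    have := unique_list l hfold
    rw [hlenL0] at this
    rw [this]
end

section
/- (Type A_n, self-dual dominant elements.) Let n ≥ 1 and let h ∈ ℝ^{n+1} be nonzero with weakly decreasing coordinates h₁ ≥ h₂ ≥ ⋯ ≥ h_{n+1} satisfying h_i = −h_{n+2−i} for all i = 1, …, n+1. Let j_h denote the number of indices i with h_i > 0. Then the minimum of ℓ_h⁻(λ) over all λ ∈ ℝ^{n+1} with weakly decreasing coordinates λ₁ ≥ ⋯ ≥ λ_{n+1} and λ₁ > λ_{n+1} equals n + 1 − j_h; it is attained at λ = ϖ₁ by the composition w = s_{n+1−j_h} ∘ ⋯ ∘ s₂ ∘ s₁ (with s₁ applied first). -/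
open scoped RealInnerProductSpace

open scoped Classical in
/-- The number of (`1`-based) indices `i` with `hᵢ > 0`. -/
noncomputable def jPos (n : ℕ) (h : EuclideanSpace ℝ (Fin (n + 1))) : ℕ :=
  Finset.card (Finset.univ.filter fun i : Fin (n + 1) => 0 < h i)

open Finset

/-! ### Auxiliary lemmas -/

lemma aux_tri (S : Finset ℕ) : S.card * S.card ≤ S.card + 2 * ∑ i ∈ S, i := by
  induction S using Finset.strongInduction with
  | _ S ih =>
    rcases S.eq_empty_or_nonempty with rfl | hS
    · simp
    · have hmax := S.max'_mem hS
      have h1 : S ⊆ Finset.range (S.max' hS + 1) := fun x hx =>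
        Finset.mem_range.2 (Nat.lt_succ_of_le (S.le_max' x hx))
      have hcard : S.card ≤ S.max' hS + 1 := by
        simpa using Finset.card_le_card h1
      have hih := ih (S.erase (S.max' hS)) (Finset.erase_ssubset hmax)
      have hce : (S.erase (S.max' hS)).card = S.card - 1 := Finset.card_erase_of_mem hmax
      have hsum : ∑ i ∈ S, i = S.max' hS + ∑ i ∈ S.erase (S.max' hS), i :=
        (Finset.add_sum_erase _ _ hmax).symm
      have hc1 : 1 ≤ S.card := Finset.card_pos.2 hS
      obtain ⟨d, hd⟩ : ∃ d, S.card = d + 1 := ⟨S.card - 1, by omega⟩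
      rw [hce, hd] at hih
      simp only [Nat.add_sub_cancel] at hih
      have hdm : d ≤ S.max' hS := by omega
      rw [hsum, hd]
      linarith

lemma aux_tri_base (b : ℕ) (S : Finset ℕ) (hb : ∀ i ∈ S, b ≤ i) :
    2*b*S.card + S.card*S.card ≤ S.card + 2 * ∑ i ∈ S, i := by
  have hinj : Set.InjOn (· - b) S := fun x hx y hy hxy => by
    have h1 := hb x hx; have h2 := hb y hy
    simp only at hxy; omega
  have h1 : ∑ i ∈ S.image (· - b), i = ∑ i ∈ S, (i - b) :=
    Finset.sum_image (fun x hx y hy => hinj hx hy)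
  have h2 : (S.image (· - b)).card = S.card := Finset.card_image_of_injOn hinj
  have h3 : ∑ i ∈ S, i = (∑ i ∈ S, (i - b)) + b * S.card := by
    have he : ∀ i ∈ S, i = (i - b) + b := fun i hi => by have := hb i hi; omega
    rw [Finset.sum_congr rfl he, Finset.sum_add_distrib, Finset.sum_const, smul_eq_mul]
    ring
  have h4 := aux_tri (S.image (· - b))
  rw [h2, h1] at h4
  linarith

lemma aux_tri_fin (N b : ℕ) (U : Finset (Fin N)) (hb : ∀ i ∈ U, b ≤ (i : ℕ)) :
    2*b*U.card + U.card*U.card ≤ U.card + 2 * ∑ i ∈ U, (i : ℕ) := by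
  have h1 : ∑ i ∈ U.image Fin.val, i = ∑ i ∈ U, (i : ℕ) :=
    Finset.sum_image (fun x _ y _ h => Fin.val_injective h)
  have h2 : (U.image Fin.val).card = U.card :=
    Finset.card_image_of_injective _ Fin.val_injective
  have := aux_tri_base b (U.image Fin.val) (fun i hi => by
    obtain ⟨x, hx, rfl⟩ := Finset.mem_image.1 hi; exact hb x hx)
  rw [h1, h2] at this
  exact this

lemma key_ineq (n m p q r L : ℤ) (hp : 0 ≤ p) (hpq : p + 1 ≤ q) (hq : q ≤ m + 1)
    (hr : 0 ≤ r) (hrq : q + r ≤ n - m) (hnm : 2*m + 1 ≤ n)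
    (hmain : p*p + 2*(m+1)*r + r*r + 2*(n-m)*q + q*q
      ≤ (p+q+r)*(p+q+r) + 2*L) :
    n - m ≤ L := by
  have hD : r*(m+1-p-q) + q*(n-m-p) ≤ L := by linarith
  rcases le_or_gt (p + q) (m + 1) with hc | hc
  · have h1 : 0 ≤ r * (m+1-p-q) := mul_nonneg hr (by omega)
    have h2 : 0 ≤ p * (n-m-p-1) := mul_nonneg hp (by omega)
    have h3 : 0 ≤ (q-p-1) * (n-m-p) := mul_nonneg (by omega) (by omega)
    linarith
  · have h1 : 0 ≤ (n-m-q-r) * (p+q-m-1) := mul_nonneg (by omega) (by omega)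
    have h2 : 0 ≤ q * (q-p-1) := mul_nonneg (by omega) (by omega)
    have h3 : 0 ≤ (m-p) * (m+1-q) := mul_nonneg (by omega) (by omega)
    have h4 : 0 ≤ (m-p) * (n-2*m-1) := mul_nonneg (by omega) (by omega)
    linarith

lemma sA_swap (n t : ℕ) (h1 : 1 ≤ t) (h2 : t ≤ n) (v : EuclideanSpace ℝ (Fin (n+1)))
    (i : Fin (n+1)) :
    sA n t v i = v (Equiv.swap (⟨t-1, by omega⟩ : Fin (n+1)) ⟨t, by omega⟩ i) := by
  show v.ofLp _ = v.ofLp _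
  refine congrArg v.ofLp ?_
  rw [Equiv.swap_apply_def]
  rcases i with ⟨iv, hiv⟩
  simp only [Fin.ext_iff, Fin.mk.injEq]
  split_ifs <;> (rw [Nat.mod_eq_of_lt (by omega)] <;> omega)

lemma compA_cons (n t : ℕ) (l : List ℕ) : compA n (t :: l) = sA n t ∘ compA n l := rfl

lemma compA_perm (n : ℕ) (l : List ℕ) (hl : ∀ m ∈ l, 1 ≤ m ∧ m ≤ n) :
    ∃ e : Equiv.Perm (Fin (n+1)), ∀ lam : EuclideanSpace ℝ (Fin (n+1)), ∀ i,
      compA n l lam i = lam (e i) := by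
  induction l with
  | nil => exact ⟨Equiv.refl _, fun lam i => rfl⟩
  | cons t l ih =>
    obtain ⟨ht1, ht2⟩ := hl t (List.mem_cons_self)
    obtain ⟨e, he⟩ := ih (fun m hm => hl m (List.mem_cons_of_mem t hm))
    refine ⟨(Equiv.swap (⟨t-1, by omega⟩ : Fin (n+1)) ⟨t, by omega⟩).trans e, fun lam i => ?_⟩
    rw [compA_cons]
    show sA n t (compA n l lam) i = _
    rw [sA_swap n t ht1 ht2]
    rw [he lam]
    rfl

lemma aux_W (n : ℕ) (l : List ℕ) (hl : ∀ m ∈ l, 1 ≤ m ∧ m ≤ n)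
    (lam : EuclideanSpace ℝ (Fin (n+1))) (c : ℝ) :
    ∑ i ∈ univ.filter (fun i : Fin (n+1) => c ≤ compA n l lam i), (i:ℕ)
      ≤ (∑ i ∈ univ.filter (fun i : Fin (n+1) => c ≤ lam i), (i:ℕ)) + l.length := by
  induction l with
  | nil => simp [compA]; exact le_rfl
  | cons t l ih =>
    obtain ⟨ht1, ht2⟩ := hl t (List.mem_cons_self)
    have ih' := ih (fun m hm => hl m (List.mem_cons_of_mem t hm))
    set v := compA n l lam with hv
    set a : Fin (n+1) := ⟨t-1, by omega⟩
    set b : Fin (n+1) := ⟨t, by omega⟩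
    have hstep : ∑ i ∈ univ.filter (fun i : Fin (n+1) => c ≤ compA n (t::l) lam i), (i:ℕ)
        ≤ (∑ i ∈ univ.filter (fun i : Fin (n+1) => c ≤ v i), (i:ℕ)) + 1 := by
      have he : ∀ i, compA n (t::l) lam i = v (Equiv.swap a b i) := by
        intro i; rw [compA_cons]; exact sA_swap n t ht1 ht2 v i
      have hre : ∑ i ∈ univ.filter (fun i : Fin (n+1) => c ≤ compA n (t::l) lam i), (i:ℕ)
          = ∑ i ∈ univ.filter (fun i : Fin (n+1) => c ≤ v i), ((Equiv.swap a b i : Fin (n+1)) : ℕ) := by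
        apply Finset.sum_nbij' (fun i => Equiv.swap a b i) (fun i => Equiv.swap a b i)
        · intro x hx
          simp only [mem_filter, mem_univ, true_and] at hx ⊢
          rwa [he] at hx
        · intro x hx
          simp only [mem_filter, mem_univ, true_and] at hx ⊢
          rw [he, Equiv.swap_apply_self]; exact hx
        · intro x _; simp
        · intro x _; simp
        · intro x _; simp
      rw [hre]
      have hpt : ∀ i : Fin (n+1), ((Equiv.swap a b i : Fin (n+1)) : ℕ) ≤ (i:ℕ) + (if i = a then 1 else 0) := by
        intro i
        rcases eq_or_ne i a with rfl | hia
        · rw [Equiv.swap_apply_left, if_pos rfl]; show t ≤ (t-1) + 1; omega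
        · rcases eq_or_ne i b with rfl | hib
          · rw [Equiv.swap_apply_right, if_neg hia]; show t - 1 ≤ t + 0; omega
          · rw [Equiv.swap_apply_of_ne_of_ne hia hib, if_neg hia]; omega
      calc ∑ i ∈ univ.filter (fun i : Fin (n+1) => c ≤ v i), ((Equiv.swap a b i : Fin (n+1)) : ℕ)
          ≤ ∑ i ∈ univ.filter (fun i : Fin (n+1) => c ≤ v i), ((i:ℕ) + if i = a then 1 else 0) :=
            Finset.sum_le_sum (fun i _ => hpt i)
        _ = (∑ i ∈ univ.filter (fun i : Fin (n+1) => c ≤ v i), (i:ℕ))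
            + ∑ i ∈ univ.filter (fun i : Fin (n+1) => c ≤ v i), (if i = a then 1 else 0) :=
            Finset.sum_add_distrib
        _ ≤ (∑ i ∈ univ.filter (fun i : Fin (n+1) => c ≤ v i), (i:ℕ)) + 1 := by
            have hite : (∑ i ∈ univ.filter (fun i : Fin (n+1) => c ≤ v i), (if i = a then 1 else 0)) ≤ 1 := by
              rw [Finset.sum_ite_eq' (univ.filter (fun i : Fin (n+1) => c ≤ v i)) a (fun _ => 1)]
              split_ifs <;> omega
            omega
    rw [List.length_cons]
    omega

lemma aux_initseg (n : ℕ) (S : Finset (Fin (n+1)))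
    (hdc : ∀ i i' : Fin (n+1), i' ≤ i → i ∈ S → i' ∈ S) (i : Fin (n+1)) :
    i ∈ S ↔ (i:ℕ) < S.card := by
  constructor
  · intro hi
    have hsub : Finset.Iic i ⊆ S := fun x hx => hdc i x (Finset.mem_Iic.1 hx) hi
    have := Finset.card_le_card hsub
    simp only [Fin.card_Iic] at this
    omega
  · intro hi
    by_contra hni
    have hsub : S ⊆ Finset.Iio i := fun x hx => by
      rw [Finset.mem_Iio]
      by_contra hxi
      exact hni (hdc x i (le_of_not_gt hxi) hx)
    have := Finset.card_le_card hsub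
    simp only [Fin.card_Iio] at this
    omega

lemma aux_dom_sum (n : ℕ) (S : Finset (Fin (n+1)))
    (hdc : ∀ i i' : Fin (n+1), i' ≤ i → i ∈ S → i' ∈ S) :
    2 * (∑ i ∈ S, (i:ℕ)) + S.card ≤ S.card * S.card := by
  have h1 : ∑ i ∈ S.image Fin.val, i = ∑ i ∈ S, (i : ℕ) :=
    Finset.sum_image (fun x _ y _ h => Fin.val_injective h)
  have h2 : S.image Fin.val ⊆ Finset.range S.card := by
    intro x hx
    obtain ⟨y, hy, rfl⟩ := Finset.mem_image.1 hx
    exact Finset.mem_range.2 ((aux_initseg n S hdc y).1 hy)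
  have h3 : ∑ i ∈ S.image Fin.val, i ≤ ∑ i ∈ Finset.range S.card, i :=
    Finset.sum_le_sum_of_subset h2
  have h4 := Finset.sum_range_id_mul_two S.card
  rcases Nat.eq_zero_or_pos S.card with h0 | h0
  · rw [Finset.card_eq_zero] at h0; subst h0; simp
  · have h5 : S.card * S.card = S.card * (S.card - 1) + S.card := by
      obtain ⟨d, hd⟩ : ∃ d, S.card = d + 1 := ⟨S.card - 1, by omega⟩
      rw [hd]; simp; ring
    rw [h5, ← h4]
    omega

lemma aux_abel (f g : ℕ → ℝ) (N : ℕ) :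
    ∑ m ∈ Finset.range N, (f m - f (m+1)) * (∑ i ∈ Finset.range (m+1), g i)
      = (∑ i ∈ Finset.range N, f i * g i) - f N * ∑ i ∈ Finset.range N, g i := by
  induction N with
  | zero => simp
  | succ N ih =>
    rw [Finset.sum_range_succ, ih, Finset.sum_range_succ (f := fun i => f i * g i),
      Finset.sum_range_succ (f := g)]
    ring

lemma aux_trans (n m : ℕ) (hm : m ≤ n+1) (μ : EuclideanSpace ℝ (Fin (n+1))) :
    ∑ i ∈ Finset.range m, (if hi : i < n+1 then μ ⟨i, hi⟩ else 0)
      = ∑ i ∈ univ.filter (fun i : Fin (n+1) => (i:ℕ) < m), μ i := by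
  rw [Finset.sum_filter]
  have h1 : ∑ i : Fin (n+1), (if (i:ℕ) < m then μ i else 0)
      = ∑ x ∈ Finset.range (n+1),
          (if hx : x < n+1 then (if x < m then μ ⟨x, hx⟩ else 0) else 0) := by
    rw [← Fin.sum_univ_eq_sum_range
      (fun x => if hx : x < n+1 then (if x < m then μ ⟨x, hx⟩ else 0) else 0) (n+1)]
    apply Finset.sum_congr rfl
    intro i _
    rw [dif_pos i.isLt]
  rw [h1]
  rw [← Finset.sum_subset (Finset.range_subset_range.2 hm)]
  · apply Finset.sum_congr rfl
    intro x hx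
    have hxm := Finset.mem_range.1 hx
    simp [hxm, show x < n+1 by omega]
  · intro x hx1 hx2
    have hxn := Finset.mem_range.1 hx1
    have hxm : ¬ x < m := by simpa using hx2
    simp [hxm, hxn]

lemma aux_step1 (n : ℕ) (hn : 1 ≤ n) (h μ : EuclideanSpace ℝ (Fin (n+1)))
    (hdec : ∀ i j : Fin (n + 1), i ≤ j → h j ≤ h i)
    (hsd : ∀ i : Fin (n + 1), h i = - h ⟨n - (i : ℕ), Nat.lt_succ_of_le (Nat.sub_le _ _)⟩)
    (hip : (∑ i, μ i * h i) < 0) :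
    ∃ m : ℕ, ∃ _ : 2*m + 1 ≤ n, h ⟨m+1, by omega⟩ < h ⟨m, by omega⟩ ∧
      (∑ i ∈ univ.filter (fun i : Fin (n+1) => (i:ℕ) < m+1), μ i)
        < ∑ i ∈ univ.filter (fun i : Fin (n+1) => n - m ≤ (i:ℕ)), μ i := by
  by_contra hcon
  push_neg at hcon
  set f : ℕ → ℝ := fun i => if hi : i < n+1 then h ⟨i, hi⟩ else 0 with hf
  set g : ℕ → ℝ := fun i => if hi : i < n+1 then μ ⟨i, hi⟩ else 0 with hg
  have hfval : ∀ (i : ℕ) (hi : i < n+1), f i = h ⟨i, hi⟩ := fun i hi => dif_pos hi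
  have hgval : ∀ (i : ℕ) (hi : i < n+1), g i = μ ⟨i, hi⟩ := fun i hi => dif_pos hi
  have hfd : ∀ i, i < n → f (i+1) ≤ f i := by
    intro i hi
    rw [hfval i (by omega), hfval (i+1) (by omega)]
    exact hdec ⟨i, by omega⟩ ⟨i+1, by omega⟩ (by simp [Fin.le_def])
  have hfsd : ∀ i, i ≤ n → f i = - f (n - i) := by
    intro i hi
    rw [hfval i (by omega), hfval (n-i) (by omega)]
    exact hsd ⟨i, by omega⟩
  have hfn : f n = - f 0 := by simpa using hfsd n le_rfl
  have e1 := aux_abel f g n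
  have e2 : ∑ m ∈ Finset.range n, (f m - f (m+1)) * (∑ i ∈ Finset.range (n-m), g i)
      = ∑ m ∈ Finset.range n, (f m - f (m+1)) * (∑ i ∈ Finset.range (m+1), g i) := by
    rw [← Finset.sum_range_reflect
      (fun m => (f m - f (m+1)) * (∑ i ∈ Finset.range (n-m), g i)) n]
    apply Finset.sum_congr rfl
    intro m hm
    have hm' := Finset.mem_range.1 hm
    have h1 : n - 1 - m + 1 = n - m := by omega
    have h2 : n - (n - 1 - m) = m + 1 := by omega
    rw [h1, h2]
    have h3 : f (n-1-m) = - f (m+1) := by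
      rw [hfsd (n-1-m) (by omega), show n - (n-1-m) = m+1 by omega]
    rw [h3, hfsd (n-m) (by omega), show n - (n-m) = m by omega]
    ring
  have e3 : ∑ m ∈ Finset.range n, (f m - f (m+1)) * (∑ i ∈ Finset.range (n+1), g i)
      = (f 0 - f n) * ∑ i ∈ Finset.range (n+1), g i := by
    rw [← Finset.sum_mul, Finset.sum_range_sub' f n]
  have hG : ∑ m ∈ Finset.range n, (f m - f (m+1)) *
        ((∑ i ∈ Finset.range (m+1), g i) + (∑ i ∈ Finset.range (n-m), g i)
          - (∑ i ∈ Finset.range (n+1), g i))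
      = 2 * ∑ i ∈ Finset.range (n+1), f i * g i := by
    simp only [mul_add, mul_sub]
    rw [Finset.sum_sub_distrib, Finset.sum_add_distrib, e1, e2, e1, e3,
      Finset.sum_range_succ (fun i => f i * g i) n, Finset.sum_range_succ g n, hfn]
    ring
  have hterm : ∀ m ∈ Finset.range n, 0 ≤ (f m - f (m+1)) *
        ((∑ i ∈ Finset.range (m+1), g i) + (∑ i ∈ Finset.range (n-m), g i)
          - (∑ i ∈ Finset.range (n+1), g i)) := by
    intro m hm
    have hm' := Finset.mem_range.1 hm
    have hge : f (m+1) ≤ f m := hfd m hm'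
    rcases eq_or_lt_of_le hge with heq | hlt
    · rw [← heq, sub_self, zero_mul]
    · have key : ∀ m' : ℕ, 2*m' + 1 ≤ n → f (m'+1) < f m' →
          0 ≤ (∑ i ∈ Finset.range (m'+1), g i) + (∑ i ∈ Finset.range (n-m'), g i)
            - (∑ i ∈ Finset.range (n+1), g i) := by
        intro m' hm2 hflt
        have hhlt : h ⟨m'+1, by omega⟩ < h ⟨m', by omega⟩ := by
          rw [← hfval m' (by omega), ← hfval (m'+1) (by omega)]
          exact hflt
        have hc := hcon m' hm2 hhlt
        have t1 := aux_trans n (m'+1) (by omega) μ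
        have t2 := aux_trans n (n-m') (by omega) μ
        have t3 := aux_trans n (n+1) (by omega) μ
        have huniv : univ.filter (fun i : Fin (n+1) => (i:ℕ) < n+1) = univ := by
          apply Finset.filter_true_of_mem
          intro i _
          exact i.isLt
        have hfe : univ.filter (fun i : Fin (n+1) => ¬ ((i:ℕ) < n - m'))
            = univ.filter (fun i : Fin (n+1) => n - m' ≤ (i:ℕ)) := by
          apply Finset.filter_congr
          intro i _
          simp [Nat.not_lt]
        have hsplit := Finset.sum_filter_add_sum_filter_not univ
          (fun i : Fin (n+1) => (i:ℕ) < n - m') μ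
        rw [hfe] at hsplit
        rw [t1, t2, t3, huniv]
        linarith
      rcases le_or_gt (2*m + 1) n with hc2 | hc2
      · exact mul_nonneg (by linarith) (key m hc2 hlt)
      · have hm2 : 2*(n-1-m) + 1 ≤ n := by omega
        have hswap : f ((n-1-m)+1) < f (n-1-m) := by
          have h3 : f (n-1-m) = - f (m+1) := by
            rw [hfsd (n-1-m) (by omega), show n - (n-1-m) = m+1 by omega]
          have h4 : f ((n-1-m)+1) = - f m := by
            rw [show n-1-m+1 = n-m by omega, hfsd (n-m) (by omega),
              show n - (n-m) = m by omega]
          rw [h3, h4]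
          linarith
        have hk := key (n-1-m) hm2 hswap
        rw [show n-1-m+1 = n-m by omega, show n - (n-1-m) = m+1 by omega] at hk
        apply mul_nonneg (by linarith)
        linarith
  have hpos : 0 ≤ 2 * ∑ i ∈ Finset.range (n+1), f i * g i := by
    rw [← hG]
    exact Finset.sum_nonneg hterm
  have hlink : ∑ i ∈ Finset.range (n+1), f i * g i = ∑ i, μ i * h i := by
    rw [← Fin.sum_univ_eq_sum_range (fun x => f x * g x) (n+1)]
    apply Finset.sum_congr rfl
    intro i _
    rw [hfval i i.isLt, hgval i i.isLt]
    simp [mul_comm]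
  rw [hlink] at hpos
  linarith

lemma aux_threshold {N : ℕ} (μ : Fin N → ℝ) (A B : Finset (Fin N))
    (hcard : A.card = B.card)
    (hPQ : ∑ i ∈ A, μ i < ∑ i ∈ B, μ i) :
    ∃ c : ℝ, (A.filter (fun i => c ≤ μ i)).card < (B.filter (fun i => c ≤ μ i)).card := by
  by_contra hcon
  push_neg at hcon
  classical
  let t : {x // x ∈ B} → Finset (Fin N) := fun i => A.filter (fun i' => μ i.1 ≤ μ i')
  have hall : ∀ s : Finset {x // x ∈ B}, s.card ≤ (s.biUnion t).card := by
    intro s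
    rcases s.eq_empty_or_nonempty with rfl | hs
    · simp
    · obtain ⟨i₀, hi₀s, hi₀min⟩ := Finset.exists_min_image s (fun i => μ i.1) hs
      have h1 : s.card ≤ (B.filter (fun i => μ i₀.1 ≤ μ i)).card := by
        apply Finset.card_le_card_of_injOn (fun i => i.1)
        · intro i hi
          exact Finset.mem_filter.2 ⟨i.2, hi₀min i hi⟩
        · intro x _ y _ hxy
          exact Subtype.ext hxy
      have h2 : (B.filter (fun i => μ i₀.1 ≤ μ i)).card ≤ (t i₀).card := hcon (μ i₀.1)
      have h3 : t i₀ ⊆ s.biUnion t := fun x hx => Finset.mem_biUnion.2 ⟨i₀, hi₀s, hx⟩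
      exact le_trans h1 (le_trans h2 (Finset.card_le_card h3))
  obtain ⟨fi, hfinj, hfmem⟩ :=
    (Finset.all_card_le_biUnion_card_iff_exists_injective t).1 hall
  have hBA : ∀ i : {x // x ∈ B}, fi i ∈ A ∧ μ i.1 ≤ μ (fi i) := by
    intro i
    have := hfmem i
    simp only [t, Finset.mem_filter] at this
    exact this
  have himg : (Finset.univ : Finset {x // x ∈ B}).image fi ⊆ A :=
    fun x hx => by
      obtain ⟨y, _, rfl⟩ := Finset.mem_image.1 hx
      exact (hBA y).1
  have hcard2 : ((Finset.univ : Finset {x // x ∈ B}).image fi).card = A.card := by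
    rw [Finset.card_image_of_injective _ hfinj]
    simp [hcard]
  have himg2 : (Finset.univ : Finset {x // x ∈ B}).image fi = A :=
    Finset.eq_of_subset_of_card_le himg (le_of_eq hcard2.symm)
  have hsumA : ∑ i ∈ A, μ i = ∑ i : {x // x ∈ B}, μ (fi i) := by
    rw [← himg2, Finset.sum_image (fun x _ y _ hxy => hfinj hxy)]
  have hsumB : ∑ i ∈ B, μ i = ∑ i : {x // x ∈ B}, μ i.1 := by
    rw [← Finset.sum_attach B (fun i => μ i)]
    rfl
  have : ∑ i ∈ B, μ i ≤ ∑ i ∈ A, μ i := by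
    rw [hsumA, hsumB]
    exact Finset.sum_le_sum (fun i _ => (hBA i).2)
  linarith

lemma word_succ (k : ℕ) : (List.range (k+1)).map (fun i => k + 1 - i)
    = (k+1) :: (List.range k).map (fun i => k - i) := by
  rw [List.range_succ_eq_map, List.map_cons, List.map_map]
  simp only [Nat.sub_zero]
  congr 1
  apply List.map_congr_left
  intro x _
  show k + 1 - (x + 1) = k - x
  omega

lemma aux_word (n : ℕ) : ∀ k, k ≤ n → ∀ i : Fin (n+1),
    compA n ((List.range k).map (fun i => k - i)) (wtA n 1) i
      = (if (i:ℕ) = k then 1 else 0) - 1 / ((n:ℝ) + 1) := by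
  intro k
  induction k with
  | zero =>
    intro _ i
    show wtA n 1 i = _
    unfold wtA
    simp [Nat.lt_one_iff]
  | succ k ih =>
    intro hk i
    rw [word_succ k]
    show sA n (k+1) (compA n ((List.range k).map (fun i => k - i)) (wtA n 1)) i = _
    rw [sA_swap n (k+1) (by omega) hk]
    rw [ih (by omega)]
    have hval : ((Equiv.swap (⟨k+1-1, by omega⟩ : Fin (n+1)) ⟨k+1, by omega⟩ i : Fin (n+1)) : ℕ) = k
        ↔ (i : ℕ) = k + 1 := by
      rcases eq_or_ne i ⟨k+1-1, by omega⟩ with rfl | hia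
      · rw [Equiv.swap_apply_left]
        simp
      · rcases eq_or_ne i ⟨k+1, by omega⟩ with rfl | hib
        · rw [Equiv.swap_apply_right]
          simp
        · rw [Equiv.swap_apply_of_ne_of_ne hia hib]
          have h1 : (i:ℕ) ≠ k := by
            intro hc
            apply hia
            apply Fin.ext
            simp only [Fin.val_mk]
            omega
          have h2 : (i:ℕ) ≠ k+1 := by
            intro hc
            apply hib
            apply Fin.ext
            simp only [Fin.val_mk]
            omega
          simp [h1, h2]
    congr 1
    by_cases hik : (i:ℕ) = k+1
    · rw [if_pos (hval.2 hik), if_pos hik]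
    · rw [if_neg (fun hc => hik (hval.1 hc)), if_neg hik]

set_option maxHeartbeats 1000000 in
theorem statement5 (n : ℕ) (hn : 1 ≤ n) (h : EuclideanSpace ℝ (Fin (n + 1)))
    (hne : h ≠ 0)
    (hdec : ∀ i j : Fin (n + 1), i ≤ j → h j ≤ h i)
    (hsd : ∀ i : Fin (n + 1), h i = - h ⟨n - (i : ℕ), by omega⟩) :
    (∀ lam : EuclideanSpace ℝ (Fin (n + 1)),
        (∀ i j : Fin (n + 1), i ≤ j → lam j ≤ lam i) →
        lam ⟨n, by omega⟩ < lam ⟨0, by omega⟩ →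
        ∀ l : List ℕ, (∀ m ∈ l, 1 ≤ m ∧ m ≤ n) →
          ⟪compA n l lam, h⟫ < 0 → n + 1 - jPos n h ≤ l.length) ∧
    IsLeast {k : ℕ | ∃ l : List ℕ, (∀ m ∈ l, 1 ≤ m ∧ m ≤ n) ∧ l.length = k ∧
        ⟪compA n l (wtA n 1), h⟫ < 0} (n + 1 - jPos n h) ∧
    ⟪compA n ((List.range (n + 1 - jPos n h)).map (fun i => n + 1 - jPos n h - i))
        (wtA n 1), h⟫ < 0 := by
  classical
  have hjc : jPos n h = (Finset.univ.filter fun i : Fin (n + 1) => 0 < h i).card := by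
    unfold jPos; congr 1
  have hfix : ∀ x y : ℕ, ∀ hx : x < n+1, ∀ hy : y < n+1, x = y → h ⟨x, hx⟩ = h ⟨y, hy⟩ := by
    intro x y hx hy hxy; subst hxy; rfl
  have hsd2 : ∀ x : ℕ, ∀ _ : x ≤ n, ∀ hx : x < n+1, ∀ hy : n - x < n+1,
      h ⟨x, hx⟩ = - h ⟨n - x, hy⟩ := by
    intro x hxn hx hy
    exact hsd ⟨x, hx⟩
  have hPdc : ∀ i i' : Fin (n+1), i' ≤ i →
      i ∈ (univ.filter fun i : Fin (n + 1) => 0 < h i) →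
      i' ∈ (univ.filter fun i : Fin (n + 1) => 0 < h i) := by
    intro i i' hle hi
    simp only [Finset.mem_filter, Finset.mem_univ, true_and] at hi ⊢
    exact lt_of_lt_of_le hi (hdec i' i hle)
  have hjiff : ∀ i : Fin (n+1), 0 < h i ↔ (i:ℕ) < jPos n h := by
    intro i
    rw [hjc, ← aux_initseg n _ hPdc i]
    simp
  have hjiff2 : ∀ x : ℕ, ∀ hx : x < n+1, (0 < h ⟨x, hx⟩ ↔ x < jPos n h) := by
    intro x hx
    have := hjiff ⟨x, hx⟩
    simpa using this
  have h0 : 0 < h ⟨0, by omega⟩ := by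
    by_contra hc
    push_neg at hc
    apply hne
    ext i
    have hle : h i ≤ 0 := le_trans (hdec ⟨0, by omega⟩ i (by simp [Fin.le_def])) hc
    have hge : 0 ≤ h i := by
      rw [hsd i]
      have h2 : h ⟨n - (i:ℕ), by omega⟩ ≤ 0 :=
        le_trans (hdec ⟨0, by omega⟩ _ (by simp [Fin.le_def])) hc
      linarith
    exact le_antisymm hle hge
  have hj1 : 1 ≤ jPos n h := by
    rw [hjc]
    apply Finset.card_pos.2
    exact ⟨⟨0, by omega⟩, Finset.mem_filter.2 ⟨Finset.mem_univ _, h0⟩⟩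
  have hjn1 : jPos n h ≤ n + 1 := by
    rw [hjc]
    exact le_trans (Finset.card_filter_le _ _) (by simp)
  have h2j : 2 * jPos n h ≤ n + 1 := by
    by_contra hc
    push_neg at hc
    have hp1 : 0 < h ⟨jPos n h - 1, by omega⟩ := (hjiff2 _ (by omega)).2 (by omega)
    have hp2 : 0 < h ⟨n - (jPos n h - 1), by omega⟩ := (hjiff2 _ (by omega)).2 (by omega)
    have he := hsd2 (jPos n h - 1) (by omega) (by omega) (by omega)
    rw [he] at hp1
    linarith
  -- Part 1
  have hpart1 : ∀ lam : EuclideanSpace ℝ (Fin (n + 1)),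
      (∀ i j : Fin (n + 1), i ≤ j → lam j ≤ lam i) →
      ∀ l : List ℕ, (∀ m ∈ l, 1 ≤ m ∧ m ≤ n) →
        ⟪compA n l lam, h⟫ < 0 → n + 1 - jPos n h ≤ l.length := by
    intro lam hdom l hl hip
    have hinner : ⟪compA n l lam, h⟫ = ∑ i, compA n l lam i * h i := by
      simp [PiLp.inner_apply, RCLike.inner_apply, mul_comm]
    have hips : (∑ i, compA n l lam i * h i) < 0 := by rw [← hinner]; exact hip
    obtain ⟨m, hm2, hmlt, hPQ⟩ := aux_step1 n hn h (compA n l lam) hdec hsd hips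
    have hmj : m + 1 ≤ jPos n h := by
      have ha : h ⟨n - m, by omega⟩ ≤ h ⟨m+1, by omega⟩ :=
        hdec ⟨m+1, by omega⟩ ⟨n-m, by omega⟩ (Fin.mk_le_mk.2 (by omega))
      have hb := hsd2 m (by omega) (by omega) (by omega)
      have hcc := (hjiff2 m (by omega)).1 (by linarith)
      omega
    suffices hsuf : n - m ≤ l.length by omega
    have hms : m ≤ n := by omega
    -- windows
    set pre := Finset.univ.filter (fun i : Fin (n+1) => (i:ℕ) < m+1) with hpre
    set suf := Finset.univ.filter (fun i : Fin (n+1) => n - m ≤ (i:ℕ)) with hsufd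
    have hpre_card : pre.card = m + 1 := by
      have he : pre = Finset.Iic (⟨m, by omega⟩ : Fin (n+1)) := by
        ext x
        simp [hpre, Finset.mem_Iic, Fin.le_def, Nat.lt_succ_iff]
      rw [he]
      simp
    have hsuf_card : suf.card = m + 1 := by
      have he : suf = Finset.Ici (⟨n - m, by omega⟩ : Fin (n+1)) := by
        ext x
        simp [hsufd, Finset.mem_Ici, Fin.le_def]
      rw [he]
      simp
      omega
    obtain ⟨c, hc⟩ := aux_threshold (compA n l lam) pre suf
      (by rw [hpre_card, hsuf_card]) hPQ
    -- facts mentioning `compA n l lam` that we want expressed via μ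
    obtain ⟨e, he0⟩ := compA_perm n l hl
    have he' : ∀ i, compA n l lam i = lam (e i) := he0 lam
    have b5 := aux_W n l hl lam c
    set μ : EuclideanSpace ℝ (Fin (n+1)) := compA n l lam with hμ
    set S := Finset.univ.filter (fun i : Fin (n+1) => c ≤ μ i) with hS
    set T1 := S.filter (fun i : Fin (n+1) => (i:ℕ) < m+1) with hT1
    set T3 := S.filter (fun i : Fin (n+1) => n - m ≤ (i:ℕ)) with hT3
    set T2 := S.filter (fun i : Fin (n+1) => ¬((i:ℕ) < m+1) ∧ ¬(n - m ≤ (i:ℕ))) with hT2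
    have hT1c : T1 = pre.filter (fun i => c ≤ μ i) := by
      rw [hT1, hS, hpre, Finset.filter_filter, Finset.filter_filter]
      apply Finset.filter_congr
      intro i _
      exact and_comm
    have hT3c : T3 = suf.filter (fun i => c ≤ μ i) := by
      rw [hT3, hS, hsufd, Finset.filter_filter, Finset.filter_filter]
      apply Finset.filter_congr
      intro i _
      exact and_comm
    have hpq : T1.card < T3.card := by rw [hT1c, hT3c]; exact hc
    have hd12 : Disjoint T1 T2 := by
      rw [Finset.disjoint_left]
      intro x hx1 hx2
      rw [hT1, Finset.mem_filter] at hx1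
      rw [hT2, Finset.mem_filter] at hx2
      exact hx2.2.1 hx1.2
    have hd13 : Disjoint T1 T3 := by
      rw [Finset.disjoint_left]
      intro x hx1 hx2
      rw [hT1, Finset.mem_filter] at hx1
      rw [hT3, Finset.mem_filter] at hx2
      omega
    have hd23 : Disjoint T2 T3 := by
      rw [Finset.disjoint_left]
      intro x hx1 hx2
      rw [hT2, Finset.mem_filter] at hx1
      rw [hT3, Finset.mem_filter] at hx2
      exact hx1.2.2 hx2.2
    have hd123 : Disjoint (T1 ∪ T2) T3 := Finset.disjoint_union_left.2 ⟨hd13, hd23⟩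
    have hun : (T1 ∪ T2) ∪ T3 = S := by
      ext x
      simp only [hT1, hT2, hT3, Finset.mem_union, Finset.mem_filter]
      constructor
      · rintro ((⟨hx, _⟩ | ⟨hx, _⟩) | ⟨hx, _⟩) <;> exact hx
      · intro hx
        by_cases h1 : (x:ℕ) < m+1
        · exact Or.inl (Or.inl ⟨hx, h1⟩)
        · by_cases h2 : n - m ≤ (x:ℕ)
          · exact Or.inr ⟨hx, h2⟩
          · exact Or.inl (Or.inr ⟨hx, h1, h2⟩)
    have hcard_split : S.card = T1.card + T2.card + T3.card := by
      rw [← hun, Finset.card_union_of_disjoint hd123, Finset.card_union_of_disjoint hd12]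
    have hsum_split : ∑ i ∈ S, (i:ℕ)
        = (∑ i ∈ T1, (i:ℕ)) + (∑ i ∈ T2, (i:ℕ)) + (∑ i ∈ T3, (i:ℕ)) := by
      rw [← hun, Finset.sum_union hd123, Finset.sum_union hd12]
    have b1 := aux_tri_fin (n+1) 0 T1 (fun i _ => Nat.zero_le _)
    have b2 := aux_tri_fin (n+1) (m+1) T2 (fun i hi => by
      rw [hT2, Finset.mem_filter] at hi
      omega)
    have b3 := aux_tri_fin (n+1) (n-m) T3 (fun i hi => by
      rw [hT3, Finset.mem_filter] at hi
      exact hi.2)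
    have hSlamdc : ∀ i i' : Fin (n+1), i' ≤ i →
        i ∈ Finset.univ.filter (fun i : Fin (n+1) => c ≤ lam i) →
        i' ∈ Finset.univ.filter (fun i : Fin (n+1) => c ≤ lam i) := by
      intro i i' hle hi
      simp only [Finset.mem_filter, Finset.mem_univ, true_and] at hi ⊢
      exact le_trans hi (hdom i' i hle)
    have b4 := aux_dom_sum n _ hSlamdc
    have hKeq : S.card = (Finset.univ.filter (fun i : Fin (n+1) => c ≤ lam i)).card := by
      rw [hS]
      apply Finset.card_bij' (fun (i : Fin (n+1)) _ => e i) (fun (i : Fin (n+1)) _ => e.symm i)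
      · intro a ha
        simp only [Finset.mem_filter, Finset.mem_univ, true_and] at ha ⊢
        rw [← he' a]
        exact ha
      · intro a ha
        simp only [Finset.mem_filter, Finset.mem_univ, true_and] at ha ⊢
        rw [he' (e.symm a), Equiv.apply_symm_apply]
        exact ha
      · intro a _
        exact e.symm_apply_apply a
      · intro a _
        exact e.apply_symm_apply a
    rw [← hKeq] at b4
    have hcomp1 : (pre.filter (fun i => c ≤ μ i)).card
        + (pre.filter (fun i => ¬ c ≤ μ i)).card = m+1 := by
      rw [← hpre_card]
      exact Finset.card_filter_add_card_filter_not _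
    have hcomp2 : S.card + (Finset.univ.filter (fun i : Fin (n+1) => ¬ c ≤ μ i)).card
        = n+1 := by
      have := Finset.card_filter_add_card_filter_not
        (s := (Finset.univ : Finset (Fin (n+1)))) (fun i : Fin (n+1) => c ≤ μ i)
      rw [hS]
      simpa using this
    have hcomp3 : (pre.filter (fun i => ¬ c ≤ μ i)).card
        ≤ (Finset.univ.filter (fun i : Fin (n+1) => ¬ c ≤ μ i)).card :=
      Finset.card_le_card (Finset.filter_subset_filter _ (Finset.subset_univ _))
    have hq_le : T3.card ≤ m + 1 := by
      rw [hT3c]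
      exact le_trans (Finset.card_le_card (Finset.filter_subset _ _)) (le_of_eq hsuf_card)
    have hqr : T3.card + T2.card ≤ n - m := by
      rw [← hT1c] at hcomp1
      omega
    -- pass to ℤ
    zify [hms] at b1 b2 b3 b4 b5 hsum_split hcard_split
    rw [hcard_split] at b4
    have hkey := key_ineq (n:ℤ) (m:ℤ) (T1.card:ℤ) (T3.card:ℤ) (T2.card:ℤ) (l.length:ℤ)
      (by omega) (by omega) (by omega) (by omega) (by omega) (by omega)
      (by linarith)
    omega
  -- structure facts for parts 2 and 3
  have hsumh : (∑ i, h i) = 0 := by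
    have h1 : ∑ i : Fin (n+1), h i.rev = ∑ i, h i :=
      Fintype.sum_equiv (Fin.revPerm) _ _ (fun i => rfl)
    have h2 : ∀ i : Fin (n+1), h i = - h i.rev := by
      intro i
      have hi := i.isLt
      rw [hsd i]
      have : (⟨n - (i:ℕ), by omega⟩ : Fin (n+1)) = i.rev := by
        apply Fin.ext
        rw [Fin.val_rev]
        show n - (i:ℕ) = n + 1 - ((i:ℕ) + 1)
        omega
      rw [this]
    have h3 : ∑ i : Fin (n+1), h i = ∑ i : Fin (n+1), - h i.rev :=
      Finset.sum_congr rfl (fun i _ => h2 i)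
    rw [Finset.sum_neg_distrib, h1] at h3
    linarith
  set k := n + 1 - jPos n h with hkdef
  have hkn : k ≤ n := by omega
  have hk1 : 1 ≤ k := by omega
  have hkneg : h ⟨k, by omega⟩ < 0 := by
    have h1 := hsd2 k (by omega) (by omega) (by omega)
    have h2 : h ⟨n - k, by omega⟩ = h ⟨jPos n h - 1, by omega⟩ :=
      hfix _ _ (by omega) (by omega) (by omega)
    have h3 : 0 < h ⟨jPos n h - 1, by omega⟩ := (hjiff2 _ (by omega)).2 (by omega)
    rw [h1, h2]
    linarith
  have hip3 : ⟪compA n ((List.range k).map (fun i => k - i)) (wtA n 1), h⟫ < 0 := by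
    have hin : ⟪compA n ((List.range k).map (fun i => k - i)) (wtA n 1), h⟫
        = ∑ i : Fin (n+1), compA n ((List.range k).map (fun i => k - i)) (wtA n 1) i * h i := by
      simp [PiLp.inner_apply, RCLike.inner_apply, mul_comm]
    rw [hin]
    rw [Finset.sum_congr rfl (fun (i : Fin (n+1)) _ => by rw [aux_word n k hkn i])]
    have hsplit : ∀ i : Fin (n+1), ((if (i:ℕ) = k then (1:ℝ) else 0) - 1/((n:ℝ)+1)) * h i
        = (if i = (⟨k, by omega⟩ : Fin (n+1)) then h i else 0) - (1/((n:ℝ)+1)) * h i := by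
      intro i
      rw [sub_mul]
      congr 1
      have hiff : ((i:ℕ) = k) ↔ (i = (⟨k, by omega⟩ : Fin (n+1))) := by
        constructor
        · intro hh; exact Fin.ext hh
        · intro hh; rw [hh]
      by_cases hca : (i:ℕ) = k
      · rw [if_pos hca, if_pos (hiff.1 hca), one_mul]
      · rw [if_neg hca, if_neg (fun hcb => hca (hiff.2 hcb)), zero_mul]
    rw [Finset.sum_congr rfl (fun i _ => hsplit i), Finset.sum_sub_distrib,
      Finset.sum_ite_eq' Finset.univ (⟨k, by omega⟩ : Fin (n+1)) h,
      ← Finset.mul_sum, hsumh, mul_zero, sub_zero, if_pos (Finset.mem_univ _)]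
    exact hkneg
  have hwdom : ∀ i j : Fin (n + 1), i ≤ j → wtA n 1 j ≤ wtA n 1 i := by
    intro i j hij
    unfold wtA
    apply sub_le_sub_right
    have hle : (i:ℕ) ≤ (j:ℕ) := hij
    split_ifs with hA hB
    · exact le_refl _
    · omega
    · norm_num
    · exact le_refl _
  refine ⟨fun lam hdom _ l hl hip => hpart1 lam hdom l hl hip, ⟨⟨(List.range k).map (fun i => k - i), ?_, ?_, hip3⟩, ?_⟩, hip3⟩
  · intro x hx
    rw [List.mem_map] at hx
    obtain ⟨y, hy, rfl⟩ := hx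
    rw [List.mem_range] at hy
    omega
  · simp
  · intro K hK
    obtain ⟨l, hl, hlen, hipK⟩ := hK
    have := hpart1 (wtA n 1) hwdom l hl hipK
    omega
end
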